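/- Let G be a finite group and N a normal subgroup of G contained in the Frattini subgroup Φ(G). If the quotient group G/N satisfies the (μ,λ)-property, then G satisfies the (μ,λ)-property. -/

import Mathlib

open Classical in
/-- The Möbius function of a finite partial order with a top element:
`mob ⊤ = 1` and `mob x = -∑_{x < y ≤ ⊤} mob y` for `x ≠ ⊤`. -/
noncomputable def mob {α : Type*} [PartialOrder α] [OrderTop α] [Finite α] (x : α) : ℤ :=
  if x = ⊤ then 1
  else - ∑ y ∈ (Set.toFinite {y : α | x < y}).toFinset.attach, mob y.1
termination_by (Set.toFinite {y : α | x < y}).toFinset.card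
decreasing_by
  have hy : x < y.1 := by
    have h2 := y.2
    rwa [Set.Finite.mem_toFinset] at h2
  refine Finset.card_lt_card ?_
  rw [Finset.ssubset_iff_of_subset]
  · exact ⟨y.1, by rwa [Set.Finite.mem_toFinset], by simp [Set.Finite.mem_toFinset]⟩
  · intro z hz
    rw [Set.Finite.mem_toFinset] at hz ⊢
    exact hy.trans hz

section C

variable (G : Type*) [Group G]

instance subgroupFinite [Finite G] : Finite (Subgroup G) :=
  Finite.of_injective (fun H => (H : Set G)) SetLike.coe_injective

/-- Type synonym for `Subgroup G`, endowed with the preorder `H ≼ K` iff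
`H ≤ gKg⁻¹` for some `g : G`. -/
def CSub := Subgroup G

variable {G}

/-- Conversion from `Subgroup G` to the type synonym `CSub G`. -/
def CSub.mk (H : Subgroup G) : CSub G := H

/-- Conversion from the type synonym `CSub G` to `Subgroup G`. -/
def CSub.toSubgroup (H : CSub G) : Subgroup G := H

variable (G)

instance : Preorder (CSub G) where
  le H K := ∃ g : G, H.toSubgroup ≤ K.toSubgroup.map (MulAut.conj g).toMonoidHom
  le_refl H := ⟨1, by
    simp only [map_one]
    rw [show MulEquiv.toMonoidHom (1 : MulAut G) = MonoidHom.id G from rfl, Subgroup.map_id]⟩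
  le_trans H K L := by
    rintro ⟨g, hg⟩ ⟨h, hh⟩
    refine ⟨g * h, hg.trans ?_⟩
    have hm := Subgroup.map_mono (f := (MulAut.conj g).toMonoidHom) hh
    rw [Subgroup.map_map] at hm
    refine hm.trans (le_of_eq ?_)
    congr 1
    ext x
    simp [mul_assoc]

instance [Finite G] : Finite (CSub G) := subgroupFinite G

/-- The poset of conjugacy classes of subgroups of `G`: for a finite group this is
the quotient of subgroups by conjugacy, with `[H] ≤ [K]` iff `H ≤ gKg⁻¹` for some `g ∈ G`. -/
abbrev ConjClassSub := Antisymmetrization (CSub G) (· ≤ ·)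

/-- The conjugacy class of a subgroup, as an element of `ConjClassSub G`. -/
def conjClassOf (H : Subgroup G) : ConjClassSub G :=
  toAntisymmetrization (α := CSub G) (· ≤ ·) (CSub.mk H)

instance : OrderTop (ConjClassSub G) where
  top := conjClassOf G ⊤
  le_top c := by
    induction c using Quotient.ind with
    | _ H =>
      show toAntisymmetrization (α := CSub G) (· ≤ ·) H ≤
        toAntisymmetrization (α := CSub G) (· ≤ ·) (CSub.mk ⊤)
      rw [toAntisymmetrization_le_toAntisymmetrization_iff]
      refine ⟨1, ?_⟩
      show H.toSubgroup ≤ Subgroup.map (MulAut.conj (1:G)).toMonoidHom (⊤ : Subgroup G)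
      rw [Subgroup.map_top_of_surjective _ (MulAut.conj (1:G)).surjective]
      exact le_top

instance [Finite G] : Finite (ConjClassSub G) := Quotient.finite _

variable {G}

/-- The Möbius function `μ_G` on the subgroup lattice of the finite group `G`. -/
noncomputable def muSub [Finite G] (H : Subgroup G) : ℤ := mob H

/-- The Möbius function `λ_G` on the poset of conjugacy classes of subgroups of the
finite group `G`, evaluated at the class of `H`. -/
noncomputable def lamSub [Finite G] (H : Subgroup G) : ℤ :=
  mob (conjClassOf G H)

/-- `G` satisfies the (μ,λ)-property if `μ_G(H) = [N_{G'}(H) : G' ∩ H] · λ_G(H)`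
for every subgroup `H ≤ G`, where `G' = [G,G]` and `N_{G'}(H) = N_G(H) ∩ G'`. -/
def MuLambdaProperty (G : Type*) [Group G] [Finite G] : Prop :=
  ∀ H : Subgroup G,
    muSub H =
      ((commutator G ⊓ H).relIndex (Subgroup.normalizer (H : Set G) ⊓ commutator G) : ℤ) * lamSub H

/-- `MaxInt G` consists of `G` itself (the subgroup `⊤`) together with all
intersections of nonempty families of maximal subgroups of `G`. -/
def MaxInt (G : Type*) [Group G] : Set (Subgroup G) :=
  {H | H = ⊤ ∨ ∃ S : Set (Subgroup G), S.Nonempty ∧ (∀ M ∈ S, IsCoatom M) ∧ H = sInf S}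

end C

instance {n R : Type*} [DecidableEq n] [Fintype n] [CommRing R] [Finite R] :
    Finite (Matrix.SpecialLinearGroup n R) :=
  Finite.of_injective (fun A => (A : Matrix n n R)) Subtype.coe_injective

open scoped MatrixGroups

section MobTheory
variable {α : Type*} [PartialOrder α] [OrderTop α] [Finite α]
variable {β : Type*} [PartialOrder β] [OrderTop β] [Finite β]

lemma mob_top : mob (⊤ : α) = 1 := by rw [mob]; simp

lemma mob_add_sum (x : α) (hx : x ≠ ⊤) :
    mob x + ∑ y ∈ (Set.toFinite {y : α | x < y}).toFinset, mob y = 0 := by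
  rw [mob, if_neg hx,
    ← Finset.sum_attach ((Set.toFinite {y : α | x < y}).toFinset) (fun y => mob y)]
  ring

open Classical in
lemma mob_sum_Ici (x : α) :
    ∑ y ∈ (Set.toFinite {y : α | x ≤ y}).toFinset, mob y = if x = ⊤ then 1 else 0 := by
  have hins : (Set.toFinite {y : α | x ≤ y}).toFinset
      = insert x (Set.toFinite {y : α | x < y}).toFinset := by
    ext y
    simp only [Set.Finite.mem_toFinset, Set.mem_setOf_eq, Finset.mem_insert]
    constructor
    · intro h
      rcases eq_or_lt_of_le h with h | h
      · exact Or.inl h.symm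
      · exact Or.inr h
    · rintro (rfl | h)
      · exact le_rfl
      · exact h.le
  rw [hins, Finset.sum_insert (by simp [Set.Finite.mem_toFinset])]
  by_cases hx : x = ⊤
  · subst hx
    have he : {y : α | (⊤:α) < y} = ∅ := by ext y; simp [not_top_lt]
    rw [if_pos rfl]
    simp [mob_top, he]
  · rw [if_neg hx]
    exact mob_add_sum x hx

open Classical in
lemma mob_eq_zero_of_not_closed (c : α → α) (hle : ∀ x, x ≤ c x)
    (h1 : ∀ x y, c x ≤ y ↔ (x ≤ y ∧ c y = y))
    (h2 : ∀ x, c x = ⊤ → x = ⊤) :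
    ∀ x : α, c x ≠ x → mob x = 0 := by
  classical
  have wf : WellFounded ((· > ·) : α → α → Prop) := IsWellFounded.wf
  intro x
  induction x using wf.induction with
  | _ x ih =>
    intro hx
    have hxt : x ≠ ⊤ := by
      rintro rfl
      exact hx (le_antisymm (le_top) (hle ⊤))
    have hsplit := Finset.sum_filter_add_sum_filter_not
      ((Set.toFinite {y : α | x ≤ y}).toFinset) (fun y => c y = y) (fun y => mob y)
    have hfe : ((Set.toFinite {y : α | x ≤ y}).toFinset).filter (fun y => c y = y)
        = (Set.toFinite {y : α | c x ≤ y}).toFinset := by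
      ext y
      simp only [Finset.mem_filter, Set.Finite.mem_toFinset, Set.mem_setOf_eq]
      exact (h1 x y).symm
    rw [hfe, mob_sum_Ici, mob_sum_Ici, if_neg hxt,
      if_neg (fun h => hxt (h2 x h))] at hsplit
    -- now : 0 + ∑ filter not = 0
    have hic : (Set.toFinite {y : α | x ≤ y}).toFinset
        = insert x (Set.toFinite {y : α | x < y}).toFinset := by
      ext y
      simp only [Set.Finite.mem_toFinset, Set.mem_setOf_eq, Finset.mem_insert]
      constructor
      · intro h
        rcases eq_or_lt_of_le h with h | h
        · exact Or.inl h.symm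
        · exact Or.inr h
      · rintro (rfl | h)
        · exact le_rfl
        · exact h.le
    rw [hic, Finset.filter_insert, if_pos (fun h => hx h), Finset.sum_insert (by
      simp [Set.Finite.mem_toFinset])] at hsplit
    have hz : ∀ y ∈ ((Set.toFinite {y : α | x < y}).toFinset).filter
        (fun y => ¬ c y = y), mob y = 0 := by
      intro y hy
      rw [Finset.mem_filter, Set.Finite.mem_toFinset] at hy
      exact ih y hy.1 hy.2
    rw [Finset.sum_congr rfl hz] at hsplit
    simpa using hsplit

lemma mob_orderIso (e : α ≃o β) (x : α) : mob (e x) = mob x := by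
  have wf : WellFounded ((· > ·) : α → α → Prop) := IsWellFounded.wf
  induction x using wf.induction with
  | _ x ih =>
    by_cases hx : x = ⊤
    · subst hx
      rw [map_top, mob_top, mob_top]
    · have hex : e x ≠ ⊤ := by
        intro h
        exact hx (by simpa using congrArg e.symm (h.trans (map_top e).symm))
      have h1 := mob_add_sum (e x) hex
      have h2 := mob_add_sum x hx
      have hsum : ∑ z ∈ (Set.toFinite {z : β | e x < z}).toFinset, mob z
          = ∑ y ∈ (Set.toFinite {y : α | x < y}).toFinset, mob y := by
        refine Finset.sum_nbij' (fun z => e.symm z) (fun y => e y) ?_ ?_ ?_ ?_ ?_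
        · intro z hz
          rw [Set.Finite.mem_toFinset, Set.mem_setOf_eq] at hz ⊢
          rwa [← e.lt_iff_lt, e.apply_symm_apply]
        · intro y hy
          rw [Set.Finite.mem_toFinset, Set.mem_setOf_eq] at hy ⊢
          rwa [e.lt_iff_lt]
        · intro z _; exact e.apply_symm_apply z
        · intro y _; exact e.symm_apply_apply y
        · intro z hz
          rw [Set.Finite.mem_toFinset, Set.mem_setOf_eq] at hz
          have : x < e.symm z := by rwa [← e.lt_iff_lt, e.apply_symm_apply]
          rw [← ih (e.symm z) this, e.apply_symm_apply]
      rw [hsum] at h1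
      omega

lemma mob_Ici (u : α) : ∀ (x : α) (hx : u ≤ x), mob (⟨x, hx⟩ : Set.Ici u) = mob x := by
  classical
  have wf : WellFounded ((· > ·) : α → α → Prop) := IsWellFounded.wf
  intro x
  induction x using wf.induction with
  | _ x ih =>
    intro hx
    by_cases hxt : x = ⊤
    · subst hxt
      have : (⟨⊤, hx⟩ : Set.Ici u) = ⊤ := by
        ext; exact (Set.Ici.coe_top (a := u)).symm
      rw [this, mob_top, mob_top]
    · have hxt' : (⟨x, hx⟩ : Set.Ici u) ≠ ⊤ := by
        intro h
        apply hxt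
        have := congrArg Subtype.val h
        rwa [Set.Ici.coe_top] at this
      have h1 := mob_add_sum (⟨x, hx⟩ : Set.Ici u) hxt'
      have h2 := mob_add_sum x hxt
      have hsum : ∑ z ∈ (Set.toFinite {z : Set.Ici u | ⟨x, hx⟩ < z}).toFinset, mob z
          = ∑ y ∈ (Set.toFinite {y : α | x < y}).toFinset, mob y := by
        refine Finset.sum_nbij' (fun z => (z.1 : α))
          (fun y => if hy : x < y then ⟨y, hx.trans hy.le⟩ else ⊤) ?_ ?_ ?_ ?_ ?_
        · intro z hz
          rw [Set.Finite.mem_toFinset, Set.mem_setOf_eq] at hz ⊢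
          exact hz
        · intro y hy
          rw [Set.Finite.mem_toFinset, Set.mem_setOf_eq] at hy ⊢
          simp only [dif_pos hy]
          exact Subtype.mk_lt_mk.mpr hy
        · intro z hz
          rw [Set.Finite.mem_toFinset, Set.mem_setOf_eq] at hz
          have hlt : x < z.1 := hz
          simp only [dif_pos hlt]
        · intro y hy
          rw [Set.Finite.mem_toFinset, Set.mem_setOf_eq] at hy
          simp only [dif_pos hy]
        · intro z hz
          rw [Set.Finite.mem_toFinset, Set.mem_setOf_eq] at hz
          have hlt : x < z.1 := hz
          exact ih z.1 hlt (hx.trans hlt.le)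
      rw [hsum] at h1
      omega

end MobTheory

section GroupPart

variable {G : Type*} [Group G] [Finite G] (N : Subgroup G) [N.Normal]

open Subgroup QuotientGroup

/-- The correspondence between subgroups containing `N` and subgroups of `G ⧸ N`. -/
noncomputable def iciQuotIso : (Set.Ici N : Set (Subgroup G)) ≃o Subgroup (G ⧸ N) where
  toFun K := Subgroup.map (QuotientGroup.mk' N) K.1
  invFun L := ⟨Subgroup.comap (QuotientGroup.mk' N) L, by
    simp only [Set.mem_Ici]
    have h := Subgroup.ker_le_comap (f := QuotientGroup.mk' N) (H := L)
    rwa [QuotientGroup.ker_mk'] at h⟩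
  left_inv K := by
    ext1
    simp only
    rw [Subgroup.comap_map_eq, QuotientGroup.ker_mk' N, sup_eq_left.mpr K.2]
  right_inv L := by
    simp only
    rw [Subgroup.map_comap_eq_self_of_surjective (QuotientGroup.mk'_surjective N)]
  map_rel_iff' {K K'} := by
    simp only [Equiv.coe_fn_mk]
    constructor
    · intro h
      have := Subgroup.comap_mono (f := QuotientGroup.mk' N) h
      rw [Subgroup.comap_map_eq, Subgroup.comap_map_eq, QuotientGroup.ker_mk' N,
        sup_eq_left.mpr K.2, sup_eq_left.mpr K'.2] at this
      exact this
    · intro h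
      exact Subgroup.map_mono h

lemma muSub_map_of_le {H : Subgroup G} (hH : N ≤ H) :
    muSub H = muSub (Subgroup.map (QuotientGroup.mk' N) H) := by
  rw [muSub, muSub, ← mob_Ici N H hH, ← mob_orderIso (iciQuotIso N) ⟨H, hH⟩]
  rfl

lemma muSub_eq_zero_of_not_le (hN : N ≤ frattini G) {H : Subgroup G} (hH : ¬ N ≤ H) :
    muSub H = 0 := by
  refine mob_eq_zero_of_not_closed (fun K => K ⊔ N) (fun K => le_sup_left) ?_ ?_ H ?_
  · intro K L
    constructor
    · intro h
      exact ⟨le_sup_left.trans h, sup_eq_left.mpr ((le_sup_right.trans h))⟩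
    · rintro ⟨h1, h2⟩
      exact sup_le h1 (sup_eq_left.mp h2)
  · intro K h
    refine frattini_nongenerating (K := K) (le_antisymm le_top ?_)
    calc ⊤ = K ⊔ N := h.symm
    _ ≤ K ⊔ frattini G := sup_le_sup_left hN K
  · rwa [Ne, sup_eq_left]

end GroupPart

section GroupPart2

variable {G : Type*} [Group G] [Finite G] (N : Subgroup G) [N.Normal]

open Subgroup QuotientGroup
open scoped Pointwise

lemma map_commutator_mk' :
    Subgroup.map (QuotientGroup.mk' N) (commutator G) = commutator (G ⧸ N) := by
  rw [commutator_def, commutator_def, Subgroup.map_commutator,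
    Subgroup.map_top_of_surjective _ (QuotientGroup.mk'_surjective N)]

lemma map_normalizer_mk' {H : Subgroup G} (hH : N ≤ H) :
    Subgroup.map (QuotientGroup.mk' N) (Subgroup.normalizer (H : Set G))
      = Subgroup.normalizer ((Subgroup.map (QuotientGroup.mk' N) H : Subgroup (G ⧸ N)) : Set (G ⧸ N)) := by
  have h1 := Subgroup.comap_normalizer_eq_of_surjective
    (Subgroup.map (QuotientGroup.mk' N) H) (QuotientGroup.mk'_surjective N)
  rw [Subgroup.comap_map_eq, QuotientGroup.ker_mk', sup_eq_left.mpr hH] at h1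
  rw [← h1, Subgroup.map_comap_eq_self_of_surjective (QuotientGroup.mk'_surjective N)]

/-- Dedekind-type modular law for a normal subgroup. -/
lemma inf_sup_normal_eq {Z Y : Subgroup G} (hNZ : N ≤ Z) :
    Z ⊓ (Y ⊔ N) = (Z ⊓ Y) ⊔ N := by
  apply le_antisymm
  · intro x hx
    obtain ⟨hxz, hxyn⟩ := Subgroup.mem_inf.mp hx
    have : (x : G) ∈ ((Y : Set G) * (N : Set G)) := by
      rw [← Subgroup.mul_normal]; exact hxyn
    obtain ⟨a, ha, n, hn, rfl⟩ := this
    have haz : a ∈ Z := by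
      have : a = a * n * n⁻¹ := by group
      rw [this]
      exact Subgroup.mul_mem _ hxz (Subgroup.inv_mem _ (hNZ hn))
    exact Subgroup.mul_mem _ (Subgroup.mem_sup_left (Subgroup.mem_inf.mpr ⟨haz, ha⟩))
      (Subgroup.mem_sup_right hn)
  · exact sup_le (inf_le_inf le_rfl le_sup_left) (le_inf hNZ le_sup_right)

lemma relindex_sup_N_eq {A B : Subgroup G} (hBA : B ≤ A) (hiNB : A ⊓ N ≤ B) :
    (B ⊔ N).relIndex (A ⊔ N) = B.relIndex A := by
  have hBN : B ⊔ N ≤ A ⊔ N := sup_le_sup_right hBA N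
  have t1 : N.relIndex (B ⊔ N) * (B ⊔ N).relIndex (A ⊔ N) = N.relIndex (A ⊔ N) :=
    Subgroup.relIndex_mul_relIndex N (B ⊔ N) (A ⊔ N) le_sup_right hBN
  rw [Subgroup.relIndex_sup_right, Subgroup.relIndex_sup_right] at t1
  have hND : N ⊓ B = N ⊓ A := le_antisymm (inf_le_inf le_rfl hBA)
    (by rw [inf_comm N A, inf_comm N B]; exact le_inf hiNB inf_le_right)
  have t2 : (N ⊓ B).relIndex B * B.relIndex A = (N ⊓ B).relIndex A :=
    Subgroup.relIndex_mul_relIndex (N ⊓ B) B A inf_le_right hBA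
  rw [Subgroup.inf_relIndex_right] at t2
  have hNA : N.relIndex A = (N ⊓ B).relIndex A := by
    rw [hND, Subgroup.inf_relIndex_right]
  have hkey : N.relIndex B * (B ⊔ N).relIndex (A ⊔ N) = N.relIndex B * B.relIndex A := by
    rw [t1, hNA, ← t2]
  have hpos : N.relIndex B ≠ 0 :=
    Subgroup.index_ne_zero_of_finite (G := B) (H := N.subgroupOf B)
  exact Nat.eq_of_mul_eq_mul_left (Nat.pos_of_ne_zero hpos) hkey

end GroupPart2

section GroupPart3

variable {G : Type*} [Group G] [Finite G] (N : Subgroup G) [N.Normal]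

open Subgroup QuotientGroup

lemma relindex_map_mk' {H : Subgroup G} (hH : N ≤ H) :
    ((commutator (G ⧸ N)) ⊓ (Subgroup.map (QuotientGroup.mk' N) H)).relIndex
      (Subgroup.normalizer ((Subgroup.map (QuotientGroup.mk' N) H : Subgroup (G ⧸ N)) : Set (G ⧸ N)) ⊓ commutator (G ⧸ N))
    = (commutator G ⊓ H).relIndex (Subgroup.normalizer (H : Set G) ⊓ commutator G) := by
  have hsurj := QuotientGroup.mk'_surjective N
  set f := QuotientGroup.mk' N with hf
  set X := commutator (G ⧸ N) ⊓ Subgroup.map f H with hX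
  set Y := Subgroup.normalizer ((Subgroup.map f H : Subgroup (G ⧸ N)) : Set (G ⧸ N)) ⊓ commutator (G ⧸ N) with hY
  have hcomapX : Subgroup.comap f X = (commutator G ⊔ N) ⊓ H := by
    rw [hX, Subgroup.comap_inf, ← map_commutator_mk' N, Subgroup.comap_map_eq,
      Subgroup.comap_map_eq, QuotientGroup.ker_mk', sup_eq_left.mpr hH]
  have hcomapY : Subgroup.comap f Y = Subgroup.normalizer (H : Set G) ⊓ (commutator G ⊔ N) := by
    rw [hY, Subgroup.comap_inf, ← map_commutator_mk' N,
      Subgroup.comap_normalizer_eq_of_surjective _ hsurj,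
      Subgroup.comap_map_eq, Subgroup.comap_map_eq, QuotientGroup.ker_mk',
      sup_eq_left.mpr hH]
  have h1 : (Subgroup.comap f X).relIndex (Subgroup.comap f Y) = X.relIndex Y := by
    rw [Subgroup.relIndex_comap, Subgroup.map_comap_eq_self_of_surjective hsurj]
  rw [← h1, hcomapX, hcomapY]
  have hB : (commutator G ⊔ N) ⊓ H = (commutator G ⊓ H) ⊔ N := by
    rw [inf_comm (commutator G ⊔ N) H, inf_sup_normal_eq N hH, inf_comm H (commutator G)]
  have hA : Subgroup.normalizer (H : Set G) ⊓ (commutator G ⊔ N) = (Subgroup.normalizer (H : Set G) ⊓ commutator G) ⊔ N :=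
    inf_sup_normal_eq N (hH.trans Subgroup.le_normalizer)
  rw [hB, hA]
  refine relindex_sup_N_eq N ?_ ?_
  · exact le_inf (inf_le_right.trans Subgroup.le_normalizer) inf_le_left
  · exact le_inf (inf_le_left.trans inf_le_right) (inf_le_right.trans hH)

end GroupPart3

section ConjPart

variable {G : Type*} [Group G] [Finite G] (N : Subgroup G) [N.Normal]

open Subgroup QuotientGroup

lemma mem_map_conj_iff {g : G} {K : Subgroup G} {x : G} :
    x ∈ Subgroup.map (MulAut.conj g).toMonoidHom K ↔ g⁻¹ * x * g ∈ K := by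
  rw [Subgroup.mem_map_equiv, MulAut.conj_symm_apply]

lemma normal_le_map_conj_iff {K : Subgroup G} (g : G) :
    N ≤ Subgroup.map (MulAut.conj g).toMonoidHom K ↔ N ≤ K := by
  have hN : N.Normal := inferInstance
  constructor
  · intro h n hn
    have h2 := h (hN.conj_mem n hn g)
    rw [mem_map_conj_iff] at h2
    rwa [show g⁻¹ * (g * n * g⁻¹) * g = n by group] at h2
  · intro h n hn
    rw [mem_map_conj_iff]
    have h2 := hN.conj_mem n hn g⁻¹
    rw [inv_inv] at h2
    exact h h2

lemma map_conj_normal (g : G) :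
    Subgroup.map (MulAut.conj g).toMonoidHom N = N := by
  have hN : N.Normal := inferInstance
  ext x
  rw [mem_map_conj_iff]
  constructor
  · intro h
    have h2 := hN.conj_mem _ h g
    rwa [show g * (g⁻¹ * x * g) * g⁻¹ = x by group] at h2
  · intro h
    have h2 := hN.conj_mem _ h g⁻¹
    rwa [show g⁻¹ * x * g⁻¹⁻¹ = g⁻¹ * x * g by group] at h2

lemma eq_top_of_top_le_map_conj {K : Subgroup G} {g : G}
    (h : (⊤ : Subgroup G) ≤ Subgroup.map (MulAut.conj g).toMonoidHom K) : K = ⊤ := by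
  rw [eq_top_iff']
  intro x
  have h2 : g * x * g⁻¹ ∈ Subgroup.map (MulAut.conj g).toMonoidHom K := h (Subgroup.mem_top _)
  rw [mem_map_conj_iff] at h2
  rwa [show g⁻¹ * (g * x * g⁻¹) * g = x by group] at h2

lemma mk'_conj_comm (g : G) (K : Subgroup G) :
    Subgroup.map (QuotientGroup.mk' N) (Subgroup.map (MulAut.conj g).toMonoidHom K)
      = Subgroup.map (MulAut.conj ((QuotientGroup.mk' N) g)).toMonoidHom
        (Subgroup.map (QuotientGroup.mk' N) K) := by
  have hc : (QuotientGroup.mk' N).comp (MulAut.conj g).toMonoidHom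
      = (MulAut.conj ((QuotientGroup.mk' N) g)).toMonoidHom.comp (QuotientGroup.mk' N) := by
    ext x
    simp [MulAut.conj_apply]
  rw [Subgroup.map_map, Subgroup.map_map, hc]

lemma mk'_conj_comap (g : G) (L : Subgroup (G ⧸ N)) :
    Subgroup.map (MulAut.conj g).toMonoidHom (Subgroup.comap (QuotientGroup.mk' N) L)
      = Subgroup.comap (QuotientGroup.mk' N)
        (Subgroup.map (MulAut.conj ((QuotientGroup.mk' N) g)).toMonoidHom L) := by
  ext x
  rw [mem_map_conj_iff, Subgroup.mem_comap, Subgroup.mem_comap, mem_map_conj_iff]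
  have hc : (QuotientGroup.mk' N) (g⁻¹ * x * g)
      = ((QuotientGroup.mk' N) g)⁻¹ * (QuotientGroup.mk' N) x * (QuotientGroup.mk' N) g := by
    simp
  rw [hc]

variable (G) in
lemma csub_mk_le_mk_iff {H K : Subgroup G} :
    CSub.mk H ≤ CSub.mk K ↔ ∃ g : G, H ≤ Subgroup.map (MulAut.conj g).toMonoidHom K :=
  Iff.rfl

lemma csub_mk_mono {H K : Subgroup G} (h : H ≤ K) : CSub.mk H ≤ CSub.mk K := by
  refine ⟨1, fun x hx => ?_⟩
  rw [mem_map_conj_iff]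
  exact (by simpa using h hx : (1:G)⁻¹ * x * 1 ∈ K)

variable (G) in
lemma conjClassOf_le_iff {H K : Subgroup G} :
    conjClassOf G H ≤ conjClassOf G K
      ↔ ∃ g : G, H ≤ Subgroup.map (MulAut.conj g).toMonoidHom K :=
  toAntisymmetrization_le_toAntisymmetrization_iff

lemma conjClassOf_mono {H K : Subgroup G} (h : H ≤ K) :
    conjClassOf G H ≤ conjClassOf G K :=
  (conjClassOf_le_iff G).mpr ⟨1, fun x hx => by rw [mem_map_conj_iff]; simpa using h hx⟩

lemma conjClassOf_exists_rep (c : ConjClassSub G) : ∃ K : Subgroup G, conjClassOf G K = c := by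
  induction c using Quotient.ind with
  | _ K => exact ⟨K.toSubgroup, rfl⟩

variable (G) in
lemma top_conjClassSub : (⊤ : ConjClassSub G) = conjClassOf G ⊤ := rfl

lemma conjClassOf_eq_top_iff {K : Subgroup G} : conjClassOf G K = ⊤ ↔ K = ⊤ := by
  constructor
  · intro h
    have h2 : AntisymmRel (· ≤ ·) (CSub.mk K) (CSub.mk (⊤ : Subgroup G)) :=
      Quotient.eq''.mp h
    obtain ⟨g, hg⟩ := h2.2
    exact eq_top_of_top_le_map_conj hg
  · rintro rfl
    rfl

end ConjPart

section ConjPart2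

variable {G : Type*} [Group G] [Finite G] (N : Subgroup G) [N.Normal]

open Subgroup QuotientGroup

/-- `K ↦ K ⊔ N` as an order hom on `CSub G`. -/
def csubSupHom : CSub G →o CSub G where
  toFun K := CSub.mk (K.toSubgroup ⊔ N)
  monotone' := by
    rintro K L ⟨g, hg⟩
    refine ⟨g, ?_⟩
    show K.toSubgroup ⊔ N ≤ Subgroup.map (MulAut.conj g).toMonoidHom (L.toSubgroup ⊔ N)
    rw [Subgroup.map_sup, map_conj_normal N g]
    exact sup_le_sup_right hg N

/-- `K ↦ K/N`-ish map as an order hom `CSub G →o CSub (G ⧸ N)`. -/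
def csubMapHom : CSub G →o CSub (G ⧸ N) where
  toFun K := CSub.mk (Subgroup.map (QuotientGroup.mk' N) K.toSubgroup)
  monotone' := by
    rintro K L ⟨g, hg⟩
    refine ⟨(QuotientGroup.mk' N) g, ?_⟩
    show Subgroup.map (QuotientGroup.mk' N) K.toSubgroup
      ≤ Subgroup.map (MulAut.conj ((QuotientGroup.mk' N) g)).toMonoidHom
        (Subgroup.map (QuotientGroup.mk' N) L.toSubgroup)
    rw [← mk'_conj_comm N g]
    exact Subgroup.map_mono hg

/-- Preimage as an order hom `CSub (G ⧸ N) →o CSub G`. -/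
def csubComapHom : CSub (G ⧸ N) →o CSub G where
  toFun L := CSub.mk (Subgroup.comap (QuotientGroup.mk' N) L.toSubgroup)
  monotone' := by
    rintro K L ⟨gb, hg⟩
    obtain ⟨g, rfl⟩ := QuotientGroup.mk'_surjective N gb
    refine ⟨g, ?_⟩
    show Subgroup.comap (QuotientGroup.mk' N) K.toSubgroup
      ≤ Subgroup.map (MulAut.conj g).toMonoidHom
        (Subgroup.comap (QuotientGroup.mk' N) L.toSubgroup)
    rw [mk'_conj_comap N g]
    exact Subgroup.comap_mono hg

noncomputable def conjSup : ConjClassSub G →o ConjClassSub G :=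
  (csubSupHom N).antisymmetrization

noncomputable def conjF : ConjClassSub G →o ConjClassSub (G ⧸ N) :=
  (csubMapHom N).antisymmetrization

noncomputable def conjG : ConjClassSub (G ⧸ N) →o ConjClassSub G :=
  (csubComapHom N).antisymmetrization

lemma conjSup_apply (K : Subgroup G) :
    conjSup N (conjClassOf G K) = conjClassOf G (K ⊔ N) :=
  OrderHom.antisymmetrization_apply_mk _ _

lemma conjF_apply (K : Subgroup G) :
    conjF N (conjClassOf G K) = conjClassOf (G ⧸ N) (Subgroup.map (QuotientGroup.mk' N) K) :=
  OrderHom.antisymmetrization_apply_mk _ _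

lemma conjG_apply (L : Subgroup (G ⧸ N)) :
    conjG N (conjClassOf (G ⧸ N) L) = conjClassOf G (Subgroup.comap (QuotientGroup.mk' N) L) :=
  OrderHom.antisymmetrization_apply_mk _ _

lemma conjGF (c : ConjClassSub G) (hc : conjClassOf G N ≤ c) : conjG N (conjF N c) = c := by
  obtain ⟨K, rfl⟩ := conjClassOf_exists_rep c
  have hNK : N ≤ K := by
    obtain ⟨g, hg⟩ := (conjClassOf_le_iff G).mp hc
    exact (normal_le_map_conj_iff N g).mp hg
  rw [conjF_apply, conjG_apply, Subgroup.comap_map_eq, QuotientGroup.ker_mk',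
    sup_eq_left.mpr hNK]

lemma conjFG (d : ConjClassSub (G ⧸ N)) : conjF N (conjG N d) = d := by
  obtain ⟨L, rfl⟩ := conjClassOf_exists_rep d
  rw [conjG_apply, conjF_apply,
    Subgroup.map_comap_eq_self_of_surjective (QuotientGroup.mk'_surjective N)]

/-- The correspondence between conjugacy classes of subgroups containing `N`
and conjugacy classes of subgroups of `G ⧸ N`. -/
noncomputable def iciConjQuotIso :
    (Set.Ici (conjClassOf G N) : Set (ConjClassSub G)) ≃o ConjClassSub (G ⧸ N) where
  toFun c := conjF N c.1
  invFun d := ⟨conjG N d, by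
    obtain ⟨L, rfl⟩ := conjClassOf_exists_rep d
    rw [conjG_apply]
    refine Set.mem_Ici.mpr (conjClassOf_mono ?_)
    have h := Subgroup.ker_le_comap (f := QuotientGroup.mk' N) (H := L)
    rwa [QuotientGroup.ker_mk'] at h⟩
  left_inv c := Subtype.ext (conjGF N c.1 c.2)
  right_inv d := conjFG N d
  map_rel_iff' {a b} := by
    constructor
    · intro h
      have h' : conjF N a.1 ≤ conjF N b.1 := h
      have h2 := (conjG N).monotone h'
      rw [conjGF N a.1 a.2, conjGF N b.1 b.2] at h2
      exact h2
    · intro h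
      exact (conjF N).monotone h

lemma lamSub_map_of_le {H : Subgroup G} (hH : N ≤ H) :
    lamSub H = lamSub (Subgroup.map (QuotientGroup.mk' N) H) := by
  rw [lamSub, lamSub]
  have hmem : conjClassOf G N ≤ conjClassOf G H := conjClassOf_mono hH
  have e1 : mob (conjClassOf G H)
      = mob ((⟨conjClassOf G H, hmem⟩ : Set.Ici (conjClassOf G N))) :=
    (mob_Ici _ _ hmem).symm
  have e2 : mob ((⟨conjClassOf G H, hmem⟩ : Set.Ici (conjClassOf G N)))
      = mob (iciConjQuotIso N ⟨conjClassOf G H, hmem⟩) :=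
    (mob_orderIso (iciConjQuotIso N) _).symm
  have e3 : iciConjQuotIso N ⟨conjClassOf G H, hmem⟩
      = conjClassOf (G ⧸ N) (Subgroup.map (QuotientGroup.mk' N) H) := conjF_apply N H
  rw [e1, e2, e3]

lemma lamSub_eq_zero_of_not_le (hN : N ≤ frattini G) {H : Subgroup G} (hH : ¬ N ≤ H) :
    lamSub H = 0 := by
  refine mob_eq_zero_of_not_closed (conjSup N) ?_ ?_ ?_ (conjClassOf G H) ?_
  · intro x
    obtain ⟨K, rfl⟩ := conjClassOf_exists_rep x
    rw [conjSup_apply]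
    exact conjClassOf_mono le_sup_left
  · intro x y
    obtain ⟨K, rfl⟩ := conjClassOf_exists_rep x
    obtain ⟨L, rfl⟩ := conjClassOf_exists_rep y
    rw [conjSup_apply, conjSup_apply]
    constructor
    · intro h
      obtain ⟨g, hg⟩ := (conjClassOf_le_iff G).mp h
      have hKL : conjClassOf G K ≤ conjClassOf G L :=
        (conjClassOf_le_iff G).mpr ⟨g, le_sup_left.trans hg⟩
      have hNL : N ≤ L := (normal_le_map_conj_iff N g).mp (le_sup_right.trans hg)
      exact ⟨hKL, by rw [sup_eq_left.mpr hNL]⟩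
    · rintro ⟨h1, h2⟩
      have hNL : N ≤ L := by
        obtain ⟨g, hg⟩ := (conjClassOf_le_iff G).mp (le_of_eq h2)
        exact (normal_le_map_conj_iff N g).mp (le_sup_right.trans hg)
      obtain ⟨g, hg⟩ := (conjClassOf_le_iff G).mp h1
      exact (conjClassOf_le_iff G).mpr
        ⟨g, sup_le hg ((normal_le_map_conj_iff N g).mpr hNL)⟩
  · intro x
    obtain ⟨K, rfl⟩ := conjClassOf_exists_rep x
    rw [conjSup_apply]
    intro h
    have hK : K ⊔ N = ⊤ := conjClassOf_eq_top_iff.mp h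
    have hKtop : K = ⊤ := by
      refine frattini_nongenerating (K := K) (le_antisymm le_top ?_)
      calc ⊤ = K ⊔ N := hK.symm
      _ ≤ K ⊔ frattini G := sup_le_sup_left hN K
    rw [conjClassOf_eq_top_iff]
    exact hKtop
  · rw [conjSup_apply]
    intro h
    apply hH
    obtain ⟨g, hg⟩ := (conjClassOf_le_iff G).mp (le_of_eq h)
    exact (normal_le_map_conj_iff N g).mp (le_sup_right.trans hg)

end ConjPart2

/-- If `N` is a normal subgroup of `G` contained in the Frattini subgroup and `G/N`
satisfies the (μ,λ)-property, then so does `G`. -/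
theorem muLambdaProperty_of_quotient_frattini (G : Type*) [Group G] [Finite G]
    (N : Subgroup G) [N.Normal] (hN : N ≤ frattini G)
    (h : MuLambdaProperty (G ⧸ N)) :
    MuLambdaProperty G := by
  intro H
  by_cases hle : N ≤ H
  · rw [muSub_map_of_le N hle, lamSub_map_of_le N hle,
      h (Subgroup.map (QuotientGroup.mk' N) H), relindex_map_mk' N hle]
  · rw [muSub_eq_zero_of_not_le N hN hle, lamSub_eq_zero_of_not_le N hN hle, mul_zero]
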